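/- (No-cloning theorem) Let H be a complex Hilbert space and x, y ∈ H unit vectors with ⟪x,y⟫ ≠ 0 and x, y linearly independent. Fix a unit vector e ∈ H. Then there is no unitary operator U : H ⊗ H → H ⊗ H and no scalars ζ₁, ζ₂ of modulus 1 such that U(x ⊗ e) = ζ₁ · (x ⊗ x) and U(y ⊗ e) = ζ₂ · (y ⊗ y). -/

import Mathlib

/-- **No-cloning theorem.** Let `H` be a complex Hilbert space and
`x, y ∈ H` unit vectors with `⟪x, y⟫ ≠ 0` and `x, y` linearly independent.  Fix a unit
vector `e ∈ H`.  Then there is no unitary operator `U : H ⊗ H → H ⊗ H` and no scalars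
`ζ₁, ζ₂` of modulus `1` with `U (x ⊗ e) = ζ₁ • (x ⊗ x)` and `U (y ⊗ e) = ζ₂ • (y ⊗ y)`.

Here the Hilbert tensor product `H ⊗ H` is formalized abstractly: `W` is a complex Hilbert
space together with a map `tp : H → H → W` (the elementary tensors) satisfying the
characteristic inner-product identity `⟪a ⊗ c, b ⊗ d⟫ = ⟪a, b⟫ · ⟪c, d⟫`, and a unitary
operator is a surjective linear isometry, i.e. a linear isometric equivalence. -/
theorem no_cloning
    {H W : Type*} [NormedAddCommGroup H] [InnerProductSpace ℂ H] [CompleteSpace H]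
    [NormedAddCommGroup W] [InnerProductSpace ℂ W] [CompleteSpace W]
    (tp : H → H → W)
    (htp : ∀ a b c d : H, (inner ℂ (tp a c) (tp b d) : ℂ) = (inner ℂ a b : ℂ) * (inner ℂ c d : ℂ))
    (x y e : H) (hx : ‖x‖ = 1) (hy : ‖y‖ = 1) (he : ‖e‖ = 1)
    (hxy : (inner ℂ x y : ℂ) ≠ 0) (hind : LinearIndependent ℂ ![x, y]) :
    ¬ ∃ (U : W ≃ₗᵢ[ℂ] W) (ζ₁ ζ₂ : ℂ), ‖ζ₁‖ = 1 ∧ ‖ζ₂‖ = 1 ∧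
        U (tp x e) = ζ₁ • tp x x ∧ U (tp y e) = ζ₂ • tp y y := by
  rintro ⟨U, ζ₁, ζ₂, hz1, hz2, hU1, hU2⟩
  have hee : (inner ℂ e e : ℂ) = 1 := by
    rw [inner_self_eq_norm_sq_to_K, he]; norm_num
  have key : (inner ℂ (tp x e) (tp y e) : ℂ) = inner ℂ ((U : W ≃ₗᵢ[ℂ] W) (tp x e)) (U (tp y e)) :=
    (U.inner_map_map _ _).symm
  rw [hU1, hU2, inner_smul_left, inner_smul_right, htp, htp, hee, mul_one] at key
  -- key : ⟪x,y⟫ = conj ζ₁ * (ζ₂ * (⟪x,y⟫ * ⟪x,y⟫))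
  have hnorm : ‖(inner ℂ x y : ℂ)‖ = 1 := by
    have h2 : ‖(inner ℂ x y : ℂ)‖ = ‖(inner ℂ x y : ℂ)‖ ^ 2 := by
      calc ‖(inner ℂ x y : ℂ)‖ = ‖(starRingEnd ℂ) ζ₁ * (ζ₂ * ((inner ℂ x y : ℂ) * inner ℂ x y))‖ := by
            rw [← key]
        _ = ‖(inner ℂ x y : ℂ)‖ ^ 2 := by
            simp [norm_mul, hz1, hz2, sq]
    have hpos : ‖(inner ℂ x y : ℂ)‖ ≠ 0 := by simpa using hxy
    have h3 : ‖(inner ℂ x y : ℂ)‖ * (‖(inner ℂ x y : ℂ)‖ - 1) = 0 := by nlinarith [h2]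
    rcases mul_eq_zero.1 h3 with h | h
    · exact absurd h hpos
    · linarith
  have hx0 : x ≠ 0 := by intro h; rw [h] at hx; simp at hx
  have hy0 : y ≠ 0 := by intro h; rw [h] at hy; simp at hy
  have : ‖(inner ℂ x y : ℂ)‖ = ‖x‖ * ‖y‖ := by rw [hx, hy, hnorm]; ring
  obtain ⟨r, hr0, hr⟩ := (norm_inner_eq_norm_iff hx0 hy0).1 this
  have := LinearIndependent.pair_iff.1 (by simpa using hind)
  have h := this r (-1) (by rw [hr]; module)
  simp at h
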